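/- The specialization functor Sp_α : Qui(A) → Qui(T_{cl(X_α)} A) is exact and commutes with the duality involution: Sp_α(V^t) is naturally isomorphic to (Sp_α V)^t for every quiver V. -/
import Mathlib


open Module LinearMap

/-- Abstract combinatorial datum of an arrangement of hyperplanes: the oriented
graph `Γ_A` of strata, with arrows `α → β` corresponding to codimension-one
adjacency of closed strata. -/
structure ArrGraph where
  S : Type
  instFin : Fintype S
  instDecEq : DecidableEq S
  arrow : S → S → Prop
  instDecArrow : DecidableRel arrow
  codim : S → ℕ
  arrow_codim : ∀ {a b : S}, arrow a b → codim b = codim a + 1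

attribute [instance] ArrGraph.instFin ArrGraph.instDecEq ArrGraph.instDecArrow

/-- A quiver of the arrangement: finite-dimensional complex vector spaces `V α`
attached to strata, and linear maps `A α β : V β → V α` vanishing unless `α, β`
are connected by an arrow, subject to `∑ β, A α β ∘ A β γ = 0` for `α ≠ γ`. -/
structure ArrQuiver (G : ArrGraph) where
  V : G.S → Type
  instACG : ∀ a, AddCommGroup (V a)
  instMod : ∀ a, Module ℂ (V a)
  instFD : ∀ a, FiniteDimensional ℂ (V a)
  A : ∀ a b : G.S, V b →ₗ[ℂ] V a
  A_supp : ∀ a b : G.S, ¬ (G.arrow a b ∨ G.arrow b a) → A a b = 0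
  rel : ∀ a c : G.S, a ≠ c → ∑ b : G.S, (A a b) ∘ₗ (A b c) = 0

attribute [instance] ArrQuiver.instACG ArrQuiver.instMod ArrQuiver.instFD

/-- The sign `(-1)^((codim α + codim β - 1)/2)` from the duality of quivers. -/
noncomputable def sgn (G : ArrGraph) (a b : G.S) : ℂ :=
  (-1 : ℂ) ^ ((G.codim a + G.codim b - 1) / 2)

/-- The structure maps of the dual quiver:
`A^t α β = (-1)^((codim α + codim β - 1)/2) (A β α)^*`. -/
noncomputable def dualA (G : ArrGraph) (Q : ArrQuiver G) (a b : G.S) :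
    Dual ℂ (Q.V b) →ₗ[ℂ] Dual ℂ (Q.V a) :=
  sgn G a b • (Q.A b a).dualMap

/-- The fiber of the regrouping map `p` (sending a stratum `β` of `A` to the
corresponding stratum `(β', β'')` of the normal-cone arrangement) over a stratum
of the normal-cone arrangement. -/
def pFiber {G G2 : ArrGraph} (p : G.S → G2.S) (s : G2.S) : Type :=
  {b : G.S // p b = s}

instance {G G2 : ArrGraph} (p : G.S → G2.S) (s : G2.S) : Fintype (pFiber p s) :=
  Subtype.fintype _

/-- The spaces of the specialized quiver `Sp_α V`:
`V_{(β',β'')} = ⊕_{β : p β = (β',β'')} V_β`. -/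
abbrev SpV {G G2 : ArrGraph} (p : G.S → G2.S)
    (V : G.S → Type) [∀ a, AddCommGroup (V a)] [∀ a, Module ℂ (V a)]
    (s : G2.S) : Type :=
  (c : pFiber p s) → V c.1

/-- The structure maps of the specialized quiver: the direct sums of the
corresponding maps of the original quiver. -/
noncomputable def SpA {G G2 : ArrGraph} (p : G.S → G2.S)
    (V : G.S → Type) [∀ a, AddCommGroup (V a)] [∀ a, Module ℂ (V a)]
    (B : ∀ a b : G.S, V b →ₗ[ℂ] V a)
    (s t : G2.S) : SpV p V t →ₗ[ℂ] SpV p V s :=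
  LinearMap.pi (fun c : pFiber p s =>
    ∑ b : pFiber p t, (B c.1 b.1) ∘ₗ (LinearMap.proj b))

/-- The map induced on specialized quivers by a morphism of quivers. -/
noncomputable def SpHom {G G2 : ArrGraph} (p : G.S → G2.S)
    (V W : G.S → Type) [∀ a, AddCommGroup (V a)] [∀ a, Module ℂ (V a)]
    [∀ a, AddCommGroup (W a)] [∀ a, Module ℂ (W a)]
    (f : ∀ a : G.S, V a →ₗ[ℂ] W a) (s : G2.S) : SpV p V s →ₗ[ℂ] SpV p W s :=
  LinearMap.pi (fun c : pFiber p s => (f c.1) ∘ₗ (LinearMap.proj c))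


instance pFiberDecEq {G G2 : ArrGraph} (p : G.S → G2.S) (s : G2.S) :
    DecidableEq (pFiber p s) :=
  fun a b => decidable_of_iff (a.1 = b.1) Subtype.ext_iff.symm

lemma SpHom_apply {G G2 : ArrGraph} (p : G.S → G2.S)
    (V W : G.S → Type) [∀ a, AddCommGroup (V a)] [∀ a, Module ℂ (V a)]
    [∀ a, AddCommGroup (W a)] [∀ a, Module ℂ (W a)]
    (f : ∀ a : G.S, V a →ₗ[ℂ] W a) (s : G2.S) (x : SpV p V s) (c : pFiber p s) :
    SpHom p V W f s x c = f c.1 (x c) := rfl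

lemma SpA_apply {G G2 : ArrGraph} (p : G.S → G2.S)
    (V : G.S → Type) [∀ a, AddCommGroup (V a)] [∀ a, Module ℂ (V a)]
    (B : ∀ a b : G.S, V b →ₗ[ℂ] V a)
    (s t : G2.S) (x : SpV p V t) (c : pFiber p s) :
    SpA p V B s t x c = ∑ b : pFiber p t, B c.1 b.1 (x b) := by
  simp [SpA, LinearMap.pi_apply, LinearMap.sum_apply]

/-- The specialization functor `Sp_α : Qui(A) → Qui(T_{cl(X_α)} A)`
is exact and commutes with the duality involution: it takes short exact sequences
of quivers to short exact sequences, and `Sp_α (V^t)` is naturally isomorphic to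
`(Sp_α V)^t` (via the canonical isomorphism `⊕ V_β^* ≅ (⊕ V_β)^*`, compatible
with all structure maps; here `p` preserves codimension, so the duality signs
agree). -/
theorem specialization_exact_and_commutes_with_duality (G G2 : ArrGraph)
    (p : G.S → G2.S)
    (harrow : ∀ a b : G.S, G.arrow a b → G2.arrow (p a) (p b))
    (hcodim : ∀ b : G.S, G2.codim (p b) = G.codim b) :
    (∀ (Q' Q Q'' : ArrQuiver G)
      (f : ∀ a : G.S, Q'.V a →ₗ[ℂ] Q.V a) (g : ∀ a : G.S, Q.V a →ₗ[ℂ] Q''.V a),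
      (∀ a b : G.S, f a ∘ₗ Q'.A a b = Q.A a b ∘ₗ f b) →
      (∀ a b : G.S, g a ∘ₗ Q.A a b = Q''.A a b ∘ₗ g b) →
      (∀ a : G.S, Function.Injective (f a)) →
      (∀ a : G.S, Function.Surjective (g a)) →
      (∀ a : G.S, LinearMap.range (f a) = LinearMap.ker (g a)) →
      (∀ s : G2.S, Function.Injective (SpHom p Q'.V Q.V f s) ∧
        Function.Surjective (SpHom p Q.V Q''.V g s) ∧
        LinearMap.range (SpHom p Q'.V Q.V f s)
          = LinearMap.ker (SpHom p Q.V Q''.V g s))) ∧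
    (∀ Q : ArrQuiver G,
      ∃ e : ∀ s : G2.S,
        SpV p (fun a => Dual ℂ (Q.V a)) s ≃ₗ[ℂ] Dual ℂ (SpV p Q.V s),
      ∀ s t : G2.S,
        (e s).toLinearMap ∘ₗ SpA p (fun a => Dual ℂ (Q.V a)) (dualA G Q) s t
          = (sgn G2 s t • (SpA p Q.V Q.A t s).dualMap) ∘ₗ (e t).toLinearMap) := by
  constructor
  · intro Q' Q Q'' f g hf hg finj gsurj hrk s
    refine ⟨?_, ?_, ?_⟩
    · intro x y h
      funext c
      exact finj c.1 (congrFun h c)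
    · intro y
      refine ⟨fun c => (gsurj c.1 (y c)).choose, ?_⟩
      funext c
      exact (gsurj c.1 (y c)).choose_spec
    · ext x
      constructor
      · rintro ⟨w, rfl⟩
        funext c
        have hm : f c.1 (w c) ∈ LinearMap.ker (g c.1) := by
          rw [← hrk c.1]; exact LinearMap.mem_range_self _ _
        exact LinearMap.mem_ker.mp hm
      · intro hx
        have hx' : ∀ c : pFiber p s, ∃ w, f c.1 w = x c := by
          intro c
          have : x c ∈ LinearMap.ker (g c.1) := congrFun hx c
          rw [← hrk c.1] at this
          exact this
        refine ⟨fun c => (hx' c).choose, funext fun c => (hx' c).choose_spec⟩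
  · intro Q
    refine ⟨fun s => LinearMap.lsum ℂ (fun c : pFiber p s => Q.V c.1) ℂ, ?_⟩
    intro s t
    refine LinearMap.ext fun φ => LinearMap.ext fun x => ?_
    have hsgn : ∀ (c : pFiber p s) (b : pFiber p t), sgn G c.1 b.1 = sgn G2 s t := by
      intro c b
      unfold sgn
      rw [← hcodim c.1, ← hcodim b.1, c.2, b.2]
    simp only [LinearMap.coe_comp, Function.comp_apply, LinearEquiv.coe_coe,
      LinearMap.lsum_apply, LinearMap.coe_sum, Finset.sum_apply,
      LinearMap.proj_apply, LinearMap.smul_apply, LinearMap.dualMap_apply,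
      smul_eq_mul]
    have lhs : ∀ c : pFiber p s,
        SpA p (fun a => Dual ℂ (Q.V a)) (dualA G Q) s t φ c (x c)
          = ∑ b : pFiber p t, sgn G2 s t * φ b (Q.A b.1 c.1 (x c)) := by
      intro c
      rw [SpA_apply]
      simp only [LinearMap.sum_apply, dualA, LinearMap.smul_apply,
        LinearMap.dualMap_apply, smul_eq_mul]
      exact Finset.sum_congr rfl fun b _ => by rw [hsgn c b]
    calc (∑ c : pFiber p s,
          SpA p (fun a => Dual ℂ (Q.V a)) (dualA G Q) s t φ c (x c))
        = ∑ c : pFiber p s, ∑ b : pFiber p t,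
            sgn G2 s t * φ b (Q.A b.1 c.1 (x c)) :=
          Finset.sum_congr rfl fun c _ => lhs c
      _ = sgn G2 s t * ∑ b : pFiber p t, φ b (SpA p Q.V Q.A t s x b) := by
          rw [Finset.mul_sum, Finset.sum_comm]
          refine Finset.sum_congr rfl fun b _ => ?_
          rw [SpA_apply, map_sum, Finset.mul_sum]
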